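/- Let p be a real number with 1/3 < p ≤ 1, p ≠ 1 allowed, let k ≥ 1 be a natural number, set β = 2(1−p)/(1+p), and let a_0, ..., a_k and b_0, ..., b_k be real numbers satisfying: b_k = 0; b_j = (1/2)·b_{j+1} + (1/2)·a_{j+1} for all j with 0 ≤ j ≤ k−1; a_j = p·(b_j + 1) + (1−p)·a_{j−1} for all j with 1 ≤ j ≤ k; and a_0 = 1 + b_0. Then a_0 = k·p/(3p−1) − 4p(1−2p)/(3p−1)^2 + ((1−p)/(3p−1))^2 · β^k, and moreover a_j = (k−j+2)p/(3p−1) − β^j·2p(1−p)/(3p−1)^2 + β^k·(1−p)^2/(3p−1)^2 and b_j = (k−j)p/(3p−1) − β^j·(1−p)^2/(3p−1)^2 + β^k·(1−p)^2/(3p−1)^2 for all j with 0 ≤ j ≤ k. -/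

import Mathlib

/-- Auxiliary: closed form for `a j`. -/
noncomputable def markovA (p β : ℝ) (k j : ℕ) : ℝ :=
  ((k : ℝ) - j + 2) * p / (3 * p - 1) - β ^ j * (2 * p * (1 - p)) / (3 * p - 1) ^ 2
    + β ^ k * (1 - p) ^ 2 / (3 * p - 1) ^ 2

/-- Auxiliary: closed form for `b j`. -/
noncomputable def markovB (p β : ℝ) (k j : ℕ) : ℝ :=
  ((k : ℝ) - j) * p / (3 * p - 1) - β ^ j * (1 - p) ^ 2 / (3 * p - 1) ^ 2
    + β ^ k * (1 - p) ^ 2 / (3 * p - 1) ^ 2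

/-- Expected numbers of `A→B` transitions of the Markov chain `N̂(p,k)`:
if `1/3 < p ≤ 1`, `β = 2(1-p)/(1+p)`, `k ≥ 1`, and `a, b` satisfy the listed linear
system, then `a 0 = kp/(3p-1) - 4p(1-2p)/(3p-1)² + ((1-p)/(3p-1))² β^k`, and moreover
`a j = (k-j+2)p/(3p-1) - β^j·2p(1-p)/(3p-1)² + β^k (1-p)²/(3p-1)²` and
`b j = (k-j)p/(3p-1) - β^j (1-p)²/(3p-1)² + β^k (1-p)²/(3p-1)²` for all `j ≤ k`. -/
theorem markov_AB_transitions (p β : ℝ) (hp₁ : 1 / 3 < p) (hp₂ : p ≤ 1)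
    (hβ : β = 2 * (1 - p) / (1 + p)) (k : ℕ) (hk : 1 ≤ k) (a b : ℕ → ℝ)
    (hb1 : b k = 0)
    (hb2 : ∀ j, j ≤ k - 1 → b j = (1 / 2) * b (j + 1) + (1 / 2) * a (j + 1))
    (ha1 : ∀ j, 1 ≤ j → j ≤ k → a j = p * (b j + 1) + (1 - p) * a (j - 1))
    (ha2 : a 0 = 1 + b 0) :
    a 0 = (k : ℝ) * p / (3 * p - 1) - 4 * p * (1 - 2 * p) / (3 * p - 1) ^ 2
        + ((1 - p) / (3 * p - 1)) ^ 2 * β ^ k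
    ∧ (∀ j ≤ k, a j = ((k : ℝ) - j + 2) * p / (3 * p - 1)
        - β ^ j * (2 * p * (1 - p)) / (3 * p - 1) ^ 2
        + β ^ k * (1 - p) ^ 2 / (3 * p - 1) ^ 2)
    ∧ (∀ j ≤ k, b j = ((k : ℝ) - j) * p / (3 * p - 1)
        - β ^ j * (1 - p) ^ 2 / (3 * p - 1) ^ 2
        + β ^ k * (1 - p) ^ 2 / (3 * p - 1) ^ 2) := by
  have hD : (0:ℝ) < 3 * p - 1 := by linarith
  have hD' : (3:ℝ) * p - 1 ≠ 0 := ne_of_gt hD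
  have hp1 : (0:ℝ) < 1 + p := by linarith
  have hp1' : (1:ℝ) + p ≠ 0 := ne_of_gt hp1
  have hβ' : β * (1 + p) = 2 * (1 - p) := by
    rw [hβ]; field_simp
  -- the closed forms satisfy the same linear system
  have hBk : markovB p β k k = 0 := by
    unfold markovB; ring
  have hA0B0 : markovA p β k 0 = 1 + markovB p β k 0 := by
    unfold markovA markovB
    field_simp [show p * 3 - 1 ≠ 0 by linarith]
    ring
  have hBrec : ∀ n : ℕ, markovB p β k n
      = 1 / 2 * markovB p β k (n + 1) + 1 / 2 * markovA p β k (n + 1) := by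
    intro n
    unfold markovA markovB
    push_cast
    rw [pow_succ, hβ]
    simp only [div_pow]
    field_simp [show p * 3 - 1 ≠ 0 by linarith]
    ring
  have hArec : ∀ n : ℕ, markovA p β k (n + 1)
      = p * (markovB p β k (n + 1) + 1) + (1 - p) * markovA p β k n := by
    intro n
    unfold markovA markovB
    push_cast
    rw [pow_succ, hβ]
    simp only [div_pow]
    field_simp [show p * 3 - 1 ≠ 0 by linarith]
    ring
  -- key induction: all differences are equal to the difference at 0
  have key : ∀ j, j ≤ k → a j - markovA p β k j = a 0 - markovA p β k 0
      ∧ b j - markovB p β k j = a 0 - markovA p β k 0 := by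
    intro j hj
    induction j with
    | zero =>
        refine ⟨rfl, ?_⟩
        rw [ha2, hA0B0]; ring
    | succ n ih =>
        obtain ⟨hu, hv⟩ := ih (by omega)
        have h1 := hb2 n (by omega)
        have h2 := ha1 (n + 1) (by omega) (by omega)
        simp only [Nat.add_sub_cancel] at h2
        have h3 : b (n + 1) - markovB p β k (n + 1)
            + (a (n + 1) - markovA p β k (n + 1))
            = 2 * (a 0 - markovA p β k 0) := by
          have := hBrec n
          linarith
        have h4 : a (n + 1) - markovA p β k (n + 1)
            = p * (b (n + 1) - markovB p β k (n + 1))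
              + (1 - p) * (a 0 - markovA p β k 0) := by
          linear_combination h2 - hArec n + (1 - p) * hu
        have h5 : (1 + p) * (a (n + 1) - markovA p β k (n + 1)
            - (a 0 - markovA p β k 0)) = 0 := by
          linear_combination h4 + p * h3
        have h6 : a (n + 1) - markovA p β k (n + 1) = a 0 - markovA p β k 0 := by
          rcases mul_eq_zero.mp h5 with h | h
          · exact absurd h hp1'
          · linarith
        refine ⟨h6, by linarith⟩
  -- conclude a 0 = A 0
  have hdiff : a 0 - markovA p β k 0 = 0 := by
    have := (key k le_rfl).2
    rw [hb1, hBk] at this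
    linarith
  have haj : ∀ j, j ≤ k → a j = markovA p β k j := by
    intro j hj
    have := (key j hj).1
    linarith
  have hbj : ∀ j, j ≤ k → b j = markovB p β k j := by
    intro j hj
    have := (key j hj).2
    linarith
  refine ⟨?_, fun j hj => haj j hj, fun j hj => hbj j hj⟩
  rw [haj 0 (by omega)]
  unfold markovA
  field_simp
  ring
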